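/- Let γ > 0 and let A, B ∈ ℝ^{d×d} be symmetric positive semidefinite matrices. Then log det(γ·I_d + A) − log det(γ·I_d + B) ≤ −Tr((γ·I_d + A)^{−1}·(B − A)) + ‖B − A‖_F² / (2γ²). -/

import Mathlib

open scoped BigOperators
open Matrix Polynomial
open scoped MatrixOrder

namespace Stmt9Aux
variable {d : ℕ}

lemma psd_smul {c : ℝ} (hc : 0 ≤ c) {A : Matrix (Fin d) (Fin d) ℝ} (hA : A.PosSemidef) :
    (c • A).PosSemidef := by
  exact hA.smul hc

lemma trace_nonneg {T : Matrix (Fin d) (Fin d) ℝ} (hT : T.PosSemidef) : 0 ≤ T.trace := by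
  rw [Matrix.trace]
  refine Finset.sum_nonneg fun i _ => ?_
  exact hT.diag_nonneg

lemma trace_mul_nonneg {S T : Matrix (Fin d) (Fin d) ℝ} (hS : S.PosSemidef)
    (hT : T.PosSemidef) : 0 ≤ (S * T).trace := by
  have h1 : S * T = S * (CFC.sqrt T * CFC.sqrt T) := by rw [CFC.sqrt_mul_sqrt_self T hT.nonneg]
  have h3 : ((CFC.sqrt T)ᴴ * S * CFC.sqrt T).PosSemidef := hS.conjTranspose_mul_mul_same _
  rw [(CFC.sqrt_nonneg T).posSemidef.1] at h3
  rw [h1, ← Matrix.mul_assoc, Matrix.trace_mul_cycle]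
  exact trace_nonneg h3

/-- If `γ I ⪯ M` then `M⁻¹ ⪯ γ⁻¹ I`. -/
lemma inv_loewner {γ : ℝ} (hγ : 0 < γ) {M : Matrix (Fin d) (Fin d) ℝ} (hM : M.PosDef)
    (hMγ : (M - γ • 1).PosSemidef) :
    (γ⁻¹ • (1 : Matrix (Fin d) (Fin d) ℝ) - M⁻¹).PosSemidef := by
  set S := CFC.sqrt M with hSdef
  have hSpsd : S.PosSemidef := (CFC.sqrt_nonneg M).posSemidef
  have hSS : S * S = M := CFC.sqrt_mul_sqrt_self M hM.posSemidef.nonneg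
  have hdet : S.det ≠ 0 := by
    intro h
    have : M.det = 0 := by rw [← hSS, Matrix.det_mul, h, zero_mul]
    exact hM.det_pos.ne' this
  have hSunit : IsUnit S.det := isUnit_iff_ne_zero.mpr hdet
  have hSinv : S * S⁻¹ = 1 := Matrix.mul_nonsing_inv S hSunit
  have hinvS : S⁻¹ * S = 1 := Matrix.nonsing_inv_mul S hSunit
  have hMinv : M⁻¹ = S⁻¹ * S⁻¹ := by rw [← hSS, Matrix.mul_inv_rev]
  have hherm : (S⁻¹)ᴴ = S⁻¹ := (Matrix.IsHermitian.inv hSpsd.1)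
  have rhs : S⁻¹ * (M - γ • 1) * S⁻¹ = 1 - γ • M⁻¹ := by
    rw [Matrix.mul_sub, Matrix.sub_mul, Matrix.mul_smul, Matrix.mul_one, Matrix.smul_mul,
      hMinv, ← hSS]
    simp only [Matrix.mul_assoc]
    rw [hSinv, Matrix.mul_one, hinvS]
  have key : γ⁻¹ • (1 : Matrix (Fin d) (Fin d) ℝ) - M⁻¹
      = γ⁻¹ • ((S⁻¹)ᴴ * (M - γ • 1) * S⁻¹) := by
    rw [hherm, rhs, smul_sub, smul_smul, inv_mul_cancel₀ hγ.ne', one_smul]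
  rw [key]
  exact psd_smul (inv_nonneg.mpr hγ.le) (hMγ.conjTranspose_mul_mul_same _)

/-- If `γ I ⪯ M` and `N` is PSD then `Tr(M⁻¹ N) ≤ γ⁻¹ Tr N`. -/
lemma trace_inv_mul_le {γ : ℝ} (hγ : 0 < γ) {M N : Matrix (Fin d) (Fin d) ℝ} (hM : M.PosDef)
    (hMγ : (M - γ • 1).PosSemidef) (hN : N.PosSemidef) :
    (M⁻¹ * N).trace ≤ γ⁻¹ * N.trace := by
  have h0 : 0 ≤ ((γ⁻¹ • (1 : Matrix (Fin d) (Fin d) ℝ) - M⁻¹) * N).trace :=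
    trace_mul_nonneg (inv_loewner hγ hM hMγ) hN
  rw [Matrix.sub_mul, Matrix.smul_mul, Matrix.one_mul, Matrix.trace_sub, Matrix.trace_smul,
    sub_nonneg, smul_eq_mul] at h0
  exact h0

/-- The key second-order bound: `Tr(P⁻¹ Δ M⁻¹ Δ) ≤ Tr(Δ²)/γ²`. -/
lemma trace_quad_le {γ : ℝ} (hγ : 0 < γ) {P M Δ : Matrix (Fin d) (Fin d) ℝ}
    (hP : P.PosDef) (hPγ : (P - γ • 1).PosSemidef)
    (hM : M.PosDef) (hMγ : (M - γ • 1).PosSemidef) (hΔ : Δ.IsHermitian) :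
    (P⁻¹ * Δ * M⁻¹ * Δ).trace ≤ (Δ * Δ).trace / γ ^ 2 := by
  have hΔH : Δᴴ = Δ := hΔ
  have hNpsd : (Δ * M⁻¹ * Δ).PosSemidef := by
    have := (hM.inv.posSemidef).conjTranspose_mul_mul_same (B := Δ)
    rwa [hΔH] at this
  have hΔΔpsd : (Δ * Δ).PosSemidef := by
    have := Matrix.posSemidef_conjTranspose_mul_self Δ
    rwa [hΔH] at this
  have step1 : (P⁻¹ * (Δ * M⁻¹ * Δ)).trace ≤ γ⁻¹ * (Δ * M⁻¹ * Δ).trace :=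
    trace_inv_mul_le hγ hP hPγ hNpsd
  have step2 : (Δ * M⁻¹ * Δ).trace = (M⁻¹ * (Δ * Δ)).trace := by
    rw [Matrix.trace_mul_cycle, ← Matrix.mul_assoc, Matrix.trace_mul_comm, ← Matrix.mul_assoc]
  have step3 : (M⁻¹ * (Δ * Δ)).trace ≤ γ⁻¹ * (Δ * Δ).trace :=
    trace_inv_mul_le hγ hM hMγ hΔΔpsd
  have hassoc : P⁻¹ * Δ * M⁻¹ * Δ = P⁻¹ * (Δ * M⁻¹ * Δ) := by
    simp only [Matrix.mul_assoc]
  rw [hassoc]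
  calc (P⁻¹ * (Δ * M⁻¹ * Δ)).trace ≤ γ⁻¹ * (Δ * M⁻¹ * Δ).trace := step1
    _ = γ⁻¹ * (M⁻¹ * (Δ * Δ)).trace := by rw [step2]
    _ ≤ γ⁻¹ * (γ⁻¹ * (Δ * Δ).trace) :=
        mul_le_mul_of_nonneg_left step3 (inv_nonneg.mpr hγ.le)
    _ = (Δ * Δ).trace / γ ^ 2 := by rw [div_eq_mul_inv, sq, mul_inv]; ring

lemma hasDerivAt_logdet (P Δ : Matrix (Fin d) (Fin d) ℝ) (s : ℝ)
    (hM : (P + s • Δ).PosDef) :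
    HasDerivAt (fun t : ℝ => Real.log (P + t • Δ).det) (((P + s • Δ)⁻¹ * Δ).trace) s := by
  set M := P + s • Δ with hMdef
  set N := M⁻¹ * Δ with hNdef
  set Q : Polynomial ℝ := (Matrix.det (1 + (X : (Polynomial ℝ)) • N.map C)).divX.divX with hQdef
  set R : Polynomial ℝ := (1 + C N.trace * X + Q * X ^ 2).comp (X - C s) with hRdef
  have hMunit : IsUnit M.det := isUnit_iff_ne_zero.mpr hM.det_pos.ne'
  have hMM : M * M⁻¹ = 1 := Matrix.mul_nonsing_inv M hMunit
  have hfun : ∀ t : ℝ, (P + t • Δ).det = M.det * R.eval t := by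
    intro t
    have hmat : P + t • Δ = M * (1 + (t - s) • N) := by
      rw [Matrix.mul_add, Matrix.mul_one, Matrix.mul_smul, hNdef, ← Matrix.mul_assoc, hMM,
        Matrix.one_mul, hMdef]
      rw [add_assoc, ← add_smul]
      ring_nf
    rw [hmat, Matrix.det_mul, Matrix.det_one_add_smul (t - s) N]
    congr 1
    simp only [hRdef, eval_comp, eval_add, eval_one, eval_mul, eval_C, eval_X, eval_pow, eval_sub]
    rfl
  have hc : R.derivative.eval s = N.trace := by
    rw [hRdef, Polynomial.derivative_comp]
    simp [Polynomial.derivative_mul]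
  have hg : HasDerivAt (fun t : ℝ => M.det * R.eval t) (M.det * R.derivative.eval s) s :=
    (R.hasDerivAt s).const_mul M.det
  have heval : R.eval s = 1 := by simp [hRdef]
  have hval : M.det * R.eval s ≠ 0 := by
    rw [heval, mul_one]; exact hM.det_pos.ne'
  have hlog := hg.log hval
  have : HasDerivAt (fun t : ℝ => Real.log (M.det * R.eval t)) (N.trace) s := by
    convert hlog using 1
    rw [heval, hc, mul_one, mul_comm M.det, mul_div_assoc, div_self hM.det_pos.ne', mul_one]
  exact this.congr_of_eventuallyEq
    (Filter.Eventually.of_forall fun t => congrArg Real.log (hfun t))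

end Stmt9Aux

open Stmt9Aux in
/-- (Smoothness of the log-determinant objective.)  For `γ > 0` and
symmetric positive semidefinite `A, B ∈ ℝ^{d×d}`,
`log det(γ I + A) − log det(γ I + B)
   ≤ −Tr((γ I + A)⁻¹ (B − A)) + ‖B − A‖_F² / (2 γ²)`,
where `‖M‖_F² = Σ_{i,j} M i j ^ 2` is the squared Frobenius norm. -/
theorem stmt_9 (d : ℕ) (γ : ℝ) (hγ : 0 < γ)
    (A B : Matrix (Fin d) (Fin d) ℝ) (hA : A.PosSemidef) (hB : B.PosSemidef) :
    Real.log (γ • (1 : Matrix (Fin d) (Fin d) ℝ) + A).det -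
        Real.log (γ • (1 : Matrix (Fin d) (Fin d) ℝ) + B).det ≤
      -((γ • (1 : Matrix (Fin d) (Fin d) ℝ) + A)⁻¹ * (B - A)).trace +
        (∑ i, ∑ j, ((B - A) i j) ^ 2) / (2 * γ ^ 2) := by
  set P : Matrix (Fin d) (Fin d) ℝ := γ • 1 + A with hPdef
  set Δ : Matrix (Fin d) (Fin d) ℝ := B - A with hΔdef
  have hΔherm : Δ.IsHermitian := hB.1.sub hA.1
  set c : ℝ := (P⁻¹ * Δ).trace with hcdef
  set K : ℝ := (Δ * Δ).trace / γ ^ 2 with hKdef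
  have hγ1 : (γ • (1 : Matrix (Fin d) (Fin d) ℝ)).PosDef := by
    rw [Matrix.smul_one_eq_diagonal]
    exact Matrix.PosDef.diagonal fun _ => hγ
  -- key facts along the segment
  have hseg : ∀ t : ℝ, t ∈ Set.Icc (0:ℝ) 1 →
      (P + t • Δ).PosDef ∧ ((P + t • Δ) - γ • 1).PosSemidef := by
    intro t ht
    have hpsd : (A + t • Δ).PosSemidef := by
      have hcomb : A + t • Δ = (1 - t) • A + t • B := by
        rw [hΔdef]; module
      rw [hcomb]
      exact (psd_smul (by linarith [ht.2]) hA).add (psd_smul ht.1 hB)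
    have h1 : P + t • Δ = γ • 1 + (A + t • Δ) := by rw [hPdef]; abel
    constructor
    · rw [h1]; exact hγ1.add_posSemidef hpsd
    · have h2 : (P + t • Δ) - γ • 1 = A + t • Δ := by rw [hPdef]; abel
      rw [h2]; exact hpsd
  have hPpd : P.PosDef := by
    have := (hseg 0 (by norm_num)).1; simpa using this
  have hPγ : (P - γ • 1).PosSemidef := by
    have := (hseg 0 (by norm_num)).2; simpa using this
  -- the function F and its derivative
  set F : ℝ → ℝ := fun t => Real.log (P + t • Δ).det - t * c + t ^ 2 * (K / 2) with hFdef
  have hF' : ∀ t ∈ Set.Icc (0:ℝ) 1,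
      HasDerivAt F ((((P + t • Δ)⁻¹ * Δ).trace - c) + t * K) t := by
    intro t ht
    have h1 := hasDerivAt_logdet P Δ t (hseg t ht).1
    have h2 : HasDerivAt (fun x : ℝ => x * c) c t := by
      simpa using (hasDerivAt_id t).mul_const c
    have h3 : HasDerivAt (fun x : ℝ => x ^ 2 * (K / 2)) (t * K) t := by
      have := (hasDerivAt_pow 2 t).mul_const (K / 2)
      refine this.congr_deriv ?_
      rw [Nat.cast_ofNat, show 2 - 1 = 1 from rfl]; ring
    exact (h1.sub h2).add h3
  -- derivative is nonnegative on the interior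
  have hderiv_nonneg : ∀ t ∈ Set.Ioo (0:ℝ) 1, 0 ≤ ((((P + t • Δ)⁻¹ * Δ).trace - c) + t * K) := by
    intro t ht
    set M : Matrix (Fin d) (Fin d) ℝ := P + t • Δ with hMdef
    have hMpd : M.PosDef := (hseg t ⟨ht.1.le, ht.2.le⟩).1
    have hMγ : (M - γ • 1).PosSemidef := (hseg t ⟨ht.1.le, ht.2.le⟩).2
    have hPunit : IsUnit P.det := isUnit_iff_ne_zero.mpr hPpd.det_pos.ne'
    have hMunit : IsUnit M.det := isUnit_iff_ne_zero.mpr hMpd.det_pos.ne'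
    have hid : P⁻¹ - M⁻¹ = t • (P⁻¹ * Δ * M⁻¹) := by
      have : P⁻¹ * (M - P) * M⁻¹ = P⁻¹ - M⁻¹ := by
        rw [Matrix.mul_sub, Matrix.sub_mul, Matrix.mul_assoc P⁻¹ M M⁻¹,
          Matrix.mul_nonsing_inv M hMunit, Matrix.nonsing_inv_mul P hPunit,
          Matrix.mul_one, Matrix.one_mul]
      rw [← this]
      have hMP : M - P = t • Δ := by rw [hMdef]; abel
      rw [hMP, Matrix.mul_smul, Matrix.smul_mul]
    have hkey : c - (M⁻¹ * Δ).trace = t * (P⁻¹ * Δ * M⁻¹ * Δ).trace := by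
      have : c - (M⁻¹ * Δ).trace = ((P⁻¹ - M⁻¹) * Δ).trace := by
        rw [Matrix.sub_mul, Matrix.trace_sub, hcdef]
      rw [this, hid, Matrix.smul_mul, Matrix.trace_smul, smul_eq_mul]
    have hquad : (P⁻¹ * Δ * M⁻¹ * Δ).trace ≤ (Δ * Δ).trace / γ ^ 2 :=
      trace_quad_le hγ hPpd hPγ hMpd hMγ hΔherm
    have : c - (M⁻¹ * Δ).trace ≤ t * K := by
      rw [hkey, hKdef]
      exact mul_le_mul_of_nonneg_left hquad ht.1.le
    linarith
  -- monotonicity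
  have hmono : MonotoneOn F (Set.Icc (0:ℝ) 1) := by
    apply monotoneOn_of_deriv_nonneg (convex_Icc 0 1)
    · intro t ht
      exact (hF' t ht).continuousAt.continuousWithinAt
    · intro t ht
      rw [interior_Icc] at ht
      exact (hF' t ⟨ht.1.le, ht.2.le⟩).differentiableAt.differentiableWithinAt
    · intro t ht
      rw [interior_Icc] at ht
      rw [(hF' t ⟨ht.1.le, ht.2.le⟩).deriv]
      exact hderiv_nonneg t ht
  have hF01 : F 0 ≤ F 1 := hmono (by norm_num) (by norm_num) zero_le_one
  -- unfold F 0 and F 1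
  have hQ : P + (1:ℝ) • Δ = γ • 1 + B := by rw [hPdef, hΔdef, one_smul]; abel
  have hF0 : F 0 = Real.log P.det := by
    show Real.log (P + (0:ℝ) • Δ).det - 0 * c + 0 ^ 2 * (K / 2) = Real.log P.det
    rw [zero_smul, add_zero]
    ring
  have hF1 : F 1 = Real.log (γ • (1 : Matrix (Fin d) (Fin d) ℝ) + B).det - c + K / 2 := by
    show Real.log (P + (1:ℝ) • Δ).det - 1 * c + 1 ^ 2 * (K / 2)
      = Real.log (γ • (1 : Matrix (Fin d) (Fin d) ℝ) + B).det - c + K / 2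
    rw [hQ]
    ring
  -- Frobenius norm identity
  have hfrob : (Δ * Δ).trace = ∑ i, ∑ j, (Δ i j) ^ 2 := by
    rw [Matrix.trace]
    refine Finset.sum_congr rfl fun i _ => ?_
    rw [Matrix.diag_apply, Matrix.mul_apply]
    refine Finset.sum_congr rfl fun j _ => ?_
    have := hΔherm.apply j i
    simp only [star, id] at this
    rw [← this, sq]
  have hK2 : K / 2 = (∑ i, ∑ j, (Δ i j) ^ 2) / (2 * γ ^ 2) := by
    rw [hKdef, hfrob]
    ring
  rw [hF0, hF1, hK2] at hF01
  have hgoal : Real.log P.det - Real.log (γ • (1 : Matrix (Fin d) (Fin d) ℝ) + B).det ≤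
      -c + (∑ i, ∑ j, (Δ i j) ^ 2) / (2 * γ ^ 2) := by linarith
  exact hgoal
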